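/- As k → ∞, k · ℓ_MSTH^k(X) → L_MST(X), where ℓ_MSTH^k(X) is the minimal bottleneck over all distributions of k beads on the edges of a minimum spanning tree of X, and L_MST(X) is the total length of that MST. -/

import Mathlib

noncomputable section
abbrev Pt := EuclideanSpace ℝ (Fin 2)

/-- Length of an edge (pair of vertices drawn from the finite point set `Y`). -/
def elen (Y : Finset Pt) : Sym2 ↥Y → ℝ :=
  Sym2.lift ⟨fun a b => dist (a : Pt) (b : Pt), fun _ _ => dist_comm _ _⟩

/-- Bottleneck (longest edge length) of a graph on the points `Y`. -/
def bneck (Y : Finset Pt) (G : SimpleGraph ↥Y) : ℝ :=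
  ⨆ e ∈ G.edgeSet, elen Y e

/-- Total edge length of a graph on the points `Y`. -/
def totalLen (Y : Finset Pt) (G : SimpleGraph ↥Y) : ℝ :=
  ∑ e ∈ (Set.toFinite G.edgeSet).toFinset, elen Y e

open Filter

/-- k times the optimal bottleneck of beading the MST of X with k beads
converges to the total MST length as k → ∞. -/
theorem beaded_mst_bottleneck_asymptotics (X : Finset Pt)
    (T : SimpleGraph ↥X) (hT : T.IsTree)
    (hmst : ∀ G : SimpleGraph ↥X, G.IsTree → totalLen X T ≤ totalLen X G)
    (E : Finset (Sym2 ↥X)) (hE : E = (Set.toFinite T.edgeSet).toFinset)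
    (hEne : E.Nonempty) (ℓ : ℕ → ℝ)
    (hℓ : ∀ k, ℓ k = sInf {c : ℝ | ∃ nn : Sym2 ↥X → ℕ,
      (∑ e ∈ E, nn e) = k ∧ c = E.sup' hEne (fun e => elen X e / ((nn e : ℝ) + 1))}) :
    Tendsto (fun k : ℕ => (k : ℝ) * ℓ k) atTop (nhds (∑ e ∈ E, elen X e)) := by
  classical
  set L := ∑ e ∈ E, elen X e with hLdef
  have hpos : ∀ e ∈ E, 0 < elen X e := by
    intro e he
    rw [hE, Set.Finite.mem_toFinset] at he
    induction e using Sym2.ind with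
    | _ a b =>
      rw [SimpleGraph.mem_edgeSet] at he
      have hne : (a : Pt) ≠ (b : Pt) := Subtype.coe_injective.ne he.ne
      simpa [elen] using dist_pos.mpr hne
  have hLpos : 0 < L := Finset.sum_pos hpos hEne
  obtain ⟨e0, he0⟩ := id hEne
  set m : ℝ := (E.card : ℝ) with hmdef
  have hmpos : 0 < m := by
    rw [hmdef]
    exact_mod_cast Finset.card_pos.mpr ⟨e0, he0⟩
  set S : ℕ → Set ℝ := fun k => {c : ℝ | ∃ nn : Sym2 ↥X → ℕ,
      (∑ e ∈ E, nn e) = k ∧ c = E.sup' hEne (fun e => elen X e / ((nn e : ℝ) + 1))}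
    with hSdef
  have hSne : ∀ k : ℕ, (S k).Nonempty := by
    intro k
    refine ⟨_, fun e => if e = e0 then k else 0, ?_, rfl⟩
    simp [Finset.sum_ite_eq' E e0, he0]
  have hbdd : ∀ k : ℕ, BddBelow (S k) := by
    intro k
    refine ⟨0, ?_⟩
    rintro c ⟨nn, hsum, rfl⟩
    refine le_trans ?_ (Finset.le_sup' (fun e => elen X e / ((nn e : ℝ) + 1)) he0)
    have := (hpos e0 he0).le
    positivity
  have hlow : ∀ k : ℕ, L / ((k : ℝ) + m) ≤ ℓ k := by
    intro k
    rw [hℓ k]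
    refine le_csInf (hSne k) ?_
    rintro c ⟨nn, hsum, rfl⟩
    have hkm : 0 < (k : ℝ) + m := add_pos_of_nonneg_of_pos (Nat.cast_nonneg k) hmpos
    rw [div_le_iff₀ hkm]
    have hce : ∀ e ∈ E, elen X e ≤
        (E.sup' hEne (fun e => elen X e / ((nn e : ℝ) + 1))) * ((nn e : ℝ) + 1) := by
      intro e he
      have h1 := Finset.le_sup' (fun e => elen X e / ((nn e : ℝ) + 1)) he
      rw [div_le_iff₀ (by positivity)] at h1
      exact h1
    calc L ≤ ∑ e ∈ E, (E.sup' hEne (fun e => elen X e / ((nn e : ℝ) + 1))) * ((nn e : ℝ) + 1) :=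
          Finset.sum_le_sum hce
      _ = (E.sup' hEne (fun e => elen X e / ((nn e : ℝ) + 1))) * (∑ e ∈ E, ((nn e : ℝ) + 1)) := by
          rw [Finset.mul_sum]
      _ = (E.sup' hEne (fun e => elen X e / ((nn e : ℝ) + 1))) * ((k : ℝ) + m) := by
          congr 1
          rw [Finset.sum_add_distrib, Finset.sum_const, nsmul_eq_mul, mul_one]
          push_cast [← hsum]
          ring
  have hup : ∀ k : ℕ, 0 < k → ℓ k ≤ L / k := by
    intro k hk
    have hkpos : 0 < (k : ℝ) := by exact_mod_cast hk
    set base : Sym2 ↥X → ℕ := fun e => ⌊(k : ℝ) * elen X e / L⌋₊ with hbase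
    have hsum_base : ∑ e ∈ E, base e ≤ k := by
      have hcast : ((∑ e ∈ E, base e : ℕ) : ℝ) ≤ (k : ℝ) := by
        push_cast
        calc ∑ e ∈ E, ((base e : ℕ) : ℝ) ≤ ∑ e ∈ E, (k : ℝ) * elen X e / L := by
              refine Finset.sum_le_sum fun e he => ?_
              exact Nat.floor_le (by have := (hpos e he).le; positivity)
          _ = (k : ℝ) * (∑ e ∈ E, elen X e) / L := by
              rw [← Finset.sum_div, ← Finset.mul_sum]
          _ = (k : ℝ) := by field_simp; exact hLdef.symm
      exact_mod_cast hcast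
    set nn : Sym2 ↥X → ℕ :=
      fun e => base e + if e = e0 then k - ∑ e ∈ E, base e else 0 with hnn
    have hsum : ∑ e ∈ E, nn e = k := by
      simp only [hnn, Finset.sum_add_distrib, Finset.sum_ite_eq' E e0, he0, if_true]
      omega
    have hmem : (E.sup' hEne (fun e => elen X e / ((nn e : ℝ) + 1))) ∈ S k := ⟨nn, hsum, rfl⟩
    rw [hℓ k]
    refine le_trans (csInf_le (hbdd k) hmem) ?_
    refine Finset.sup'_le _ _ fun e he => ?_
    rw [div_le_div_iff₀ (by positivity) hkpos]
    have h1 : (k : ℝ) * elen X e / L < (base e : ℝ) + 1 := Nat.lt_floor_add_one _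
    have h1' : (k : ℝ) * elen X e ≤ ((base e : ℝ) + 1) * L := by
      rw [div_lt_iff₀ hLpos] at h1
      exact h1.le
    have h2 : (base e : ℝ) + 1 ≤ (nn e : ℝ) + 1 := by
      have : base e ≤ nn e := Nat.le_add_right _ _
      exact_mod_cast add_le_add_left (Nat.cast_le.mpr this) 1
    nlinarith [hLpos]
  have hlow' : ∀ k : ℕ, (k : ℝ) / ((k : ℝ) + m) * L ≤ (k : ℝ) * ℓ k := by
    intro k
    calc (k : ℝ) / ((k : ℝ) + m) * L = (k : ℝ) * (L / ((k : ℝ) + m)) := by ring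
      _ ≤ (k : ℝ) * ℓ k := mul_le_mul_of_nonneg_left (hlow k) (Nat.cast_nonneg k)
  have hup' : ∀ k : ℕ, (k : ℝ) * ℓ k ≤ L := by
    intro k
    rcases Nat.eq_zero_or_pos k with h | h
    · simpa [h] using hLpos.le
    · have hkpos : 0 < (k : ℝ) := by exact_mod_cast h
      calc (k : ℝ) * ℓ k ≤ (k : ℝ) * (L / k) :=
            mul_le_mul_of_nonneg_left (hup k h) hkpos.le
        _ = L := by field_simp
  have hlim : Tendsto (fun k : ℕ => (k : ℝ) / ((k : ℝ) + m) * L) atTop (nhds L) := by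
    have h1 : Tendsto (fun k : ℕ => (k : ℝ) + m) atTop atTop :=
      tendsto_atTop_add_const_right _ _ tendsto_natCast_atTop_atTop
    have h2 : Tendsto (fun k : ℕ => m / ((k : ℝ) + m)) atTop (nhds 0) :=
      Tendsto.div_atTop tendsto_const_nhds h1
    have h3 : Tendsto (fun k : ℕ => (1 - m / ((k : ℝ) + m)) * L) atTop (nhds ((1 - 0) * L)) :=
      (tendsto_const_nhds.sub h2).mul tendsto_const_nhds
    rw [show (1 - (0:ℝ)) * L = L by ring] at h3
    refine h3.congr fun k => ?_
    have hkm : (k : ℝ) + m ≠ 0 :=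
      (add_pos_of_nonneg_of_pos (Nat.cast_nonneg k) hmpos).ne'
    field_simp
    ring
  exact tendsto_of_tendsto_of_tendsto_of_le_of_le hlim tendsto_const_nhds hlow' hup'
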